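/- Let Σ be a finite alphabet with |Σ| ≥ 2, let r, m ≥ 1 be integers, let 0 < δ < 1 and 0 < ε ≤ 1 be reals, and let s > 0 be a real. Let C : Σ^r → Σ^m be an injective encoding whose image has relative distance at least δ (any two distinct codewords differ in at least δ·m coordinates). If √(2ε/(1−δ)) ≥ s, then m ≥ s²·(r−1)/(2ε). -/

import Mathlib

/-- Quantitative limitation of the distance-based collision analysis (Section 3): if an
injective encoding `C : Σ^r → Σ^m` has relative distance at least `δ` and the
distance-based collision bound `√(2ε/(1−δ))` is at least `s`, then, by the Singleton
bound, `m ≥ s²(r−1)/(2ε)`. -/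
theorem length_lower_bound_of_distance_collision_bound
    (σ : Type) [Fintype σ] (hσ : 2 ≤ Fintype.card σ)
    (r m : ℕ) (hr : 1 ≤ r) (hm : 1 ≤ m)
    (δ ε s : ℝ) (hδ0 : 0 < δ) (hδ1 : δ < 1) (hε0 : 0 < ε) (hε1 : ε ≤ 1) (hs : 0 < s)
    (C : (Fin r → σ) → (Fin m → σ)) (hinj : Function.Injective C)
    (hdist : ∀ x y : Fin r → σ, x ≠ y →
      δ * (m : ℝ) ≤ (({j : Fin m | C x j ≠ C y j}).ncard : ℝ))
    (hbound : s ≤ Real.sqrt (2 * ε / (1 - δ))) :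
    s ^ 2 * ((r : ℝ) - 1) / (2 * ε) ≤ (m : ℝ) := by
  set t : ℕ := ⌈δ * (m : ℝ)⌉₊ with ht
  have hδm_pos : 0 < δ * (m : ℝ) := by positivity
  have ht1 : 1 ≤ t := by
    rw [ht]; exact Nat.one_le_ceil_iff.mpr hδm_pos
  have htm : t ≤ m := by
    rw [ht]; exact Nat.ceil_le.mpr (by nlinarith [(by exact_mod_cast hm : (1:ℝ) ≤ (m:ℝ))])
  set n : ℕ := m - t + 1 with hn
  have hnm : n ≤ m := by omega
  -- Singleton bound: r ≤ n
  have hrn : r ≤ n := by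
    set f : (Fin r → σ) → (Fin n → σ) := fun x j => C x (Fin.castLE hnm j) with hf
    have hfinj : Function.Injective f := by
      intro x y hxy
      by_contra hne
      set S : Set (Fin m) := {j : Fin m | C x j ≠ C y j} with hS
      have hsub : ∀ j ∈ S, (j : ℕ) ∈ Set.Ico n m := by
        intro j hj
        refine ⟨?_, j.isLt⟩
        by_contra hlt
        push_neg at hlt
        exact hj (congrFun hxy ⟨(j : ℕ), hlt⟩)
      have hcard : S.ncard ≤ (Set.Ico n m).ncard :=
        Set.ncard_le_ncard_of_injOn (fun j => (j : ℕ)) hsub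
          (fun a _ b _ hab => Fin.ext hab) (Set.finite_Ico n m)
      have hIco : (Set.Ico n m).ncard = m - n := by
        rw [← Nat.card_coe_set_eq, Nat.card_eq_card_toFinset,
          Set.toFinset_Ico, Nat.card_Ico]
      rw [hIco] at hcard
      have hge : t ≤ S.ncard := Nat.ceil_le.mpr (hdist x y hne)
      omega
    have := Fintype.card_le_of_injective f hfinj
    simp only [Fintype.card_fun, Fintype.card_fin] at this
    exact (Nat.pow_le_pow_iff_right (by omega : 1 < Fintype.card σ)).mp this
  -- translate to reals: r - 1 ≤ (1 - δ) * m
  have hreal : (r : ℝ) - 1 ≤ (1 - δ) * (m : ℝ) := by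
    have h1 : ((r : ℝ)) ≤ ((m - t : ℕ) : ℝ) + 1 := by
      have : (r : ℝ) ≤ (n : ℝ) := Nat.cast_le.mpr hrn
      rwa [hn, Nat.cast_add, Nat.cast_one] at this
    have h2 : ((m - t : ℕ) : ℝ) = (m : ℝ) - (t : ℝ) := by
      rw [Nat.cast_sub htm]
    have h3 : δ * (m : ℝ) ≤ (t : ℝ) := Nat.le_ceil _
    nlinarith
  -- s^2 ≤ 2ε/(1-δ)
  have h1δ : 0 < 1 - δ := by linarith
  have hsq : s ^ 2 ≤ 2 * ε / (1 - δ) := by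
    have h0 : 0 ≤ 2 * ε / (1 - δ) := by positivity
    nlinarith [Real.sq_sqrt h0, Real.sqrt_nonneg (2 * ε / (1 - δ))]
  have hr1 : (0 : ℝ) ≤ (r : ℝ) - 1 := by
    have : (1 : ℝ) ≤ (r : ℝ) := by exact_mod_cast hr
    linarith
  rw [div_le_iff₀ (by positivity)]
  calc s ^ 2 * ((r : ℝ) - 1) ≤ (2 * ε / (1 - δ)) * ((r : ℝ) - 1) := by
        exact mul_le_mul_of_nonneg_right hsq hr1
    _ ≤ (2 * ε / (1 - δ)) * ((1 - δ) * (m : ℝ)) := by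
        exact mul_le_mul_of_nonneg_left hreal (by positivity)
    _ = (m : ℝ) * (2 * ε) := by field_simp
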